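/- Let I be an ideal on ℕ which has the Baire property. Then there exists a linear isometry T : C(βℕ∖ℕ, ℝ) →ₗᵢ C(↥P_I, ℝ) such that for every g ≠ 0 the range of T g is a nondegenerate closed interval: there exist a b : ℝ with a < b and Set.range (T g) = Set.Icc a b. (In other words, the set of functions in C(P_I) whose range is an interval, together with 0, contains a subspace isometric to C(βℕ∖ℕ).) -/

import Mathlib

open scoped ENNReal

/-- The remainder `βℕ∖ℕ` of the Stone–Čech compactification of `ℕ`: the set of nonprincipal
ultrafilters on `ℕ`, as a subspace of `Ultrafilter ℕ`. -/
def betaNRemainder : Set (Ultrafilter ℕ) := (Set.range (pure : ℕ → Ultrafilter ℕ))ᶜ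

lemma isOpen_range_pure : IsOpen (Set.range (pure : ℕ → Ultrafilter ℕ)) := by
  have h : Set.range (pure : ℕ → Ultrafilter ℕ)
      = ⋃ n : ℕ, {u : Ultrafilter ℕ | ({n} : Set ℕ) ∈ u} := by
    ext u
    simp only [Set.mem_range, Set.mem_iUnion, Set.mem_setOf_eq]
    constructor
    · rintro ⟨n, rfl⟩
      exact ⟨n, by simp⟩
    · rintro ⟨n, hn⟩
      obtain ⟨x, hx, rfl⟩ := Ultrafilter.eq_pure_of_finite_mem (Set.finite_singleton n) hn
      exact ⟨x, rfl⟩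
  rw [h]
  exact isOpen_iUnion fun n => ultrafilter_isOpen_basic _

instance : CompactSpace ↥betaNRemainder := by
  rw [← isCompact_iff_compactSpace]
  exact isOpen_range_pure.isClosed_compl.isCompact


/-- `I` is an ideal on `ℕ`: closed under subsets and finite unions, contains singletons,
and does not contain `ℕ` itself. -/
def IsNatIdeal (I : Set (Set ℕ)) : Prop :=
  (∀ A B : Set ℕ, A ⊆ B → B ∈ I → A ∈ I) ∧
  (∀ A B : Set ℕ, A ∈ I → B ∈ I → A ∪ B ∈ I) ∧
  (∀ n : ℕ, ({n} : Set ℕ) ∈ I) ∧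
  (Set.univ : Set ℕ) ∉ I

/-- `P_I`: the set of ultrafilters on `ℕ` extending the filter dual to the ideal `I`. -/
def PI (I : Set (Set ℕ)) : Set (Ultrafilter ℕ) := {U : Ultrafilter ℕ | ∀ A ∈ I, Aᶜ ∈ U}

instance (I : Set (Set ℕ)) : CompactSpace ↥(PI I) := by
  rw [← isCompact_iff_compactSpace]
  have h : PI I = ⋂ A ∈ I, {U : Ultrafilter ℕ | Aᶜ ∈ U} := by
    ext U; simp [PI]
  rw [h]
  exact (isClosed_biInter fun A _ => ultrafilter_isClosed_basic _).isCompact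


/-- A set has the Baire property if it differs from an open set by a meagre set. -/
def HasBaireProperty {α : Type*} [TopologicalSpace α] (S : Set α) : Prop :=
  ∃ O : Set α, IsOpen O ∧ IsMeagre (symmDiff S O)

/-- An ideal on `ℕ` has the Baire property if the corresponding set of characteristic
functions has the Baire property in the Cantor space `ℕ → Bool`. -/
def IdealHasBaireProperty (I : Set (Set ℕ)) : Prop :=
  HasBaireProperty {χ : ℕ → Bool | {n : ℕ | χ n = true} ∈ I}


open Set Filter
open scoped Topology Classical

noncomputable section

lemma finite_mem_ideal {I : Set (Set ℕ)} (hI : IsNatIdeal I) {A : Set ℕ} (hA : A.Finite) :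
    A ∈ I := by
  obtain ⟨hdown, hunion, hsing, -⟩ := hI
  have key : ∀ s : Finset ℕ, (↑s : Set ℕ) ∈ I := by
    intro s
    induction s using Finset.induction with
    | empty =>
      rw [Finset.coe_empty]
      exact hdown ∅ {0} (empty_subset _) (hsing 0)
    | insert a s h ih =>
      rw [Finset.coe_insert, Set.insert_eq]
      exact hunion _ _ (hsing a) ih
  have := key hA.toFinset
  rwa [Set.Finite.coe_toFinset] at this

lemma cylinder_subset_open {O : Set (ℕ → Bool)} (hO : IsOpen O) {χ : ℕ → Bool} (hχ : χ ∈ O) :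
    ∃ F : Finset ℕ, {ψ : ℕ → Bool | ∀ i ∈ F, ψ i = χ i} ⊆ O := by
  rw [isOpen_pi_iff] at hO
  obtain ⟨F, u, hu, hsub⟩ := hO χ hχ
  refine ⟨F, fun ψ hψ => hsub fun i hi => ?_⟩
  rw [hψ i hi]
  exact (hu i hi).2

lemma ideal_meagre {I : Set (Set ℕ)} (hI : IsNatIdeal I) (hBP : IdealHasBaireProperty I) :
    IsMeagre {χ : ℕ → Bool | {n : ℕ | χ n = true} ∈ I} := by
  obtain ⟨O, hO, hM⟩ := hBP
  set S := {χ : ℕ → Bool | {n : ℕ | χ n = true} ∈ I} with hS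
  rcases eq_empty_or_nonempty O with rfl | ⟨χ₀, hχ₀⟩
  · simpa [symmDiff] using hM
  exfalso
  obtain ⟨F, hF⟩ := cylinder_subset_open hO hχ₀
  set C : Set (ℕ → Bool) := {ψ | ∀ i ∈ F, ψ i = χ₀ i} with hC
  -- the flip homeomorphism
  set h : (ℕ → Bool) → (ℕ → Bool) := fun ψ i => if i ∈ F then ψ i else !(ψ i) with hh
  have hcont : Continuous h := by
    refine continuous_pi fun i => ?_
    by_cases hi : i ∈ F
    · simpa [hh, hi] using continuous_apply i
    · simp only [hh, hi, if_false]
      exact Continuous.comp (continuous_of_discreteTopology (α := Bool) (f := not)) (continuous_apply i)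
  have hinv : ∀ ψ, h (h ψ) = ψ := by
    intro ψ; funext i; by_cases hi : i ∈ F <;> simp [hh, hi]
  let e : Homeomorph (ℕ → Bool) (ℕ → Bool) :=
    ⟨⟨h, h, fun ψ => hinv ψ, fun ψ => hinv ψ⟩, hcont, hcont⟩
  have hM' : IsMeagre (h ⁻¹' (symmDiff S O)) :=
    hM.preimage_of_isOpenMap hcont e.isOpenMap
  have hD : IsMeagre (symmDiff S O ∪ h ⁻¹' (symmDiff S O)) := by
    rw [IsMeagre, Set.compl_union]
    exact Filter.inter_mem hM hM'
  have hdense : Dense (symmDiff S O ∪ h ⁻¹' (symmDiff S O))ᶜ := dense_of_mem_residual hD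
  have hCopen : IsOpen C := by
    have : C = Set.pi (↑F : Set ℕ) (fun i => {χ₀ i}) := by
      ext ψ; simp [hC, Set.mem_pi]
    rw [this]
    exact isOpen_set_pi F.finite_toSet (fun i _ => isOpen_discrete _)
  obtain ⟨χ, hχD, hχC⟩ := hdense.exists_mem_open hCopen ⟨χ₀, fun i _ => rfl⟩
  rw [Set.mem_compl_iff, Set.mem_union] at hχD
  push_neg at hχD
  obtain ⟨hχ1, hχ2⟩ := hχD
  have hχO : χ ∈ O := hF hχC
  have hhχC : h χ ∈ C := by
    intro i hi
    rw [hh]; simp only [hi, if_true]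
    exact hχC i hi
  have hhχO : h χ ∈ O := hF hhχC
  have hχS : χ ∈ S := by
    by_contra hs
    exact hχ1 (Or.inr ⟨hχO, hs⟩)
  have hhχS : h χ ∈ S := by
    by_contra hs
    exact hχ2 (Set.mem_preimage.2 (Or.inr ⟨hhχO, hs⟩))
  obtain ⟨hdown, hunion, hsing, huniv⟩ := hI
  have hAA' : ((↑F : Set ℕ))ᶜ ⊆ {n | χ n = true} ∪ {n | h χ n = true} := by
    intro n hn
    simp only [Set.mem_compl_iff, Finset.mem_coe] at hn
    by_cases hb : χ n = true
    · exact Or.inl hb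
    · refine Or.inr ?_
      simp only [Set.mem_setOf_eq, hh, hn, if_false]
      simp [Bool.not_eq_true] at hb
      simp [hb]
  have h1 : ((↑F : Set ℕ))ᶜ ∈ I := hdown _ _ hAA' (hunion _ _ hχS hhχS)
  have h2 : (↑F : Set ℕ) ∈ I := finite_mem_ideal ⟨hdown, hunion, hsing, huniv⟩ F.finite_toSet
  have : (Set.univ : Set ℕ) ∈ I := by
    have := hunion _ _ h2 h1
    rwa [Set.union_compl_self] at this
  exact huniv this


-- assumed from part 1:
lemma prefix_cylinder_isOpen (c : ℕ → Bool) (n : ℕ) :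
    IsOpen {ψ : ℕ → Bool | ∀ i < n, ψ i = c i} := by
  have : {ψ : ℕ → Bool | ∀ i < n, ψ i = c i}
      = Set.pi (↑(Finset.range n) : Set ℕ) (fun i => {c i}) := by
    ext ψ; simp [Set.mem_pi]
  rw [this]
  exact isOpen_set_pi (Finset.range n).finite_toSet (fun i _ => isOpen_discrete _)

lemma ext_single {F : Set (ℕ → Bool)} (hFo : IsOpen Fᶜ) (hFd : Dense Fᶜ)
    (c : ℕ → Bool) (n : ℕ) :
    ∃ m, n ≤ m ∧ ∃ d : ℕ → Bool, (∀ i < n, d i = c i) ∧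
      ∀ χ : ℕ → Bool, (∀ i < m, χ i = d i) → χ ∉ F := by
  obtain ⟨χ₀, hχ₀F, hχ₀C⟩ := hFd.exists_mem_open (prefix_cylinder_isOpen c n)
    ⟨c, fun i _ => rfl⟩
  obtain ⟨G, hG⟩ := cylinder_subset_open hFo hχ₀F
  refine ⟨max n (G.sup id + 1), le_max_left _ _, χ₀, fun i hi => hχ₀C i hi, ?_⟩
  intro χ hχ hmem
  have : χ ∈ Fᶜ := hG (fun i hi => hχ i (lt_of_lt_of_le
    (Nat.lt_succ_of_le (Finset.le_sup (f := id) hi)) (le_max_right _ _)))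
  exact this hmem

lemma ext_all {F : Set (ℕ → Bool)} (hFc : IsClosed F) (hFnd : IsNowhereDense F) (n : ℕ) :
    ∃ m, n < m ∧ ∃ d : ℕ → Bool,
      ∀ χ : ℕ → Bool, (∀ i, n ≤ i → i < m → χ i = d i) → χ ∉ F := by
  obtain ⟨hFo, hFd⟩ := isClosed_isNowhereDense_iff_compl.1 ⟨hFc, hFnd⟩
  have claim : ∀ s : Finset (ℕ → Bool), ∃ m, n ≤ m ∧ ∃ d : ℕ → Bool,
      ∀ c ∈ s, ∀ χ : ℕ → Bool, (∀ i < n, χ i = c i) →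
        (∀ i, n ≤ i → i < m → χ i = d i) → χ ∉ F := by
    intro s
    induction s using Finset.induction with
    | empty => exact ⟨n, le_refl n, fun _ => false, fun c hc => absurd hc (by simp)⟩
    | insert c s hnotmem ih =>
      obtain ⟨m, hnm, d, hd⟩ := ih
      obtain ⟨m', hmm', d', hd'c, hd'⟩ :=
        ext_single hFo hFd (fun i => if i < n then c i else d i) m
      refine ⟨m', le_trans hnm hmm', d', ?_⟩
      intro c₀ hc₀ χ hlow hhigh
      rcases Finset.mem_insert.1 hc₀ with rfl | hc₀s
      · refine hd' χ ?_
        intro i him'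
        by_cases hin : i < n
        · rw [hlow i hin, hd'c i (lt_of_lt_of_le hin hnm), if_pos hin]
        · exact hhigh i (Nat.le_of_not_lt hin) him'
      · refine hd c₀ hc₀s χ hlow ?_
        intro i hni him
        rw [hhigh i hni (lt_of_lt_of_le him hmm'), hd'c i him]
        simp [Nat.not_lt.2 hni]
  obtain ⟨m, hnm, d, hd⟩ := claim
    (Finset.image (fun σ : Fin n → Bool => (fun i => if h : i < n then σ ⟨i, h⟩ else false))
      Finset.univ)
  refine ⟨m + 1, Nat.lt_succ_of_le hnm, d, ?_⟩
  intro χ hχ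
  refine hd (fun i => if h : i < n then χ i else false) ?_ χ ?_ ?_
  · exact Finset.mem_image.2 ⟨fun j => χ j, Finset.mem_univ _, rfl⟩
  · intro i hi; simp [hi]
  · intro i hni him
    exact hχ i hni (Nat.lt_succ_of_lt him)

lemma nwd_union {A B : Set (ℕ → Bool)} (hA : IsClosed A) (hAn : IsNowhereDense A)
    (hB : IsClosed B) (hBn : IsNowhereDense B) :
    IsClosed (A ∪ B) ∧ IsNowhereDense (A ∪ B) := by
  obtain ⟨hAo, hAd⟩ := isClosed_isNowhereDense_iff_compl.1 ⟨hA, hAn⟩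
  obtain ⟨hBo, hBd⟩ := isClosed_isNowhereDense_iff_compl.1 ⟨hB, hBn⟩
  rw [isClosed_isNowhereDense_iff_compl, Set.compl_union]
  exact ⟨hAo.inter hBo, hAd.inter_of_isOpen_left hBd hAo⟩

theorem talagrand {I : Set (Set ℕ)} (hI : IsNatIdeal I)
    (hmeagre : IsMeagre {χ : ℕ → Bool | {n : ℕ | χ n = true} ∈ I}) :
    ∃ nn : ℕ → ℕ, StrictMono nn ∧ nn 0 = 0 ∧
      ∀ A ∈ I, {k : ℕ | Set.Ico (nn k) (nn (k+1)) ⊆ A}.Finite := by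
  set S := {χ : ℕ → Bool | {n : ℕ | χ n = true} ∈ I} with hS
  obtain ⟨𝒮, h𝒮nd, h𝒮c, h𝒮sub⟩ := isMeagre_iff_countable_union_isNowhereDense.1 hmeagre
  obtain ⟨f, hf⟩ := (h𝒮c.insert ∅).exists_eq_range (Set.insert_nonempty _ _)
  have hfnd : ∀ j, IsNowhereDense (f j) := by
    intro j
    have hmem : f j ∈ insert ∅ 𝒮 := hf ▸ Set.mem_range_self j
    rcases Set.mem_insert_iff.1 hmem with h | h
    · rw [h]; exact isNowhereDense_empty
    · exact h𝒮nd _ h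
  have hsub : S ⊆ ⋃ j, closure (f j) := by
    intro χ hχ
    obtain ⟨t, ht, hχt⟩ := h𝒮sub hχ
    have : t ∈ Set.range f := by rw [← hf]; exact Set.mem_insert_of_mem _ ht
    obtain ⟨j, rfl⟩ := this
    exact Set.mem_iUnion.2 ⟨j, subset_closure hχt⟩
  set G : ℕ → Set (ℕ → Bool) := fun k => ⋃ j ∈ Finset.range (k+1), closure (f j) with hGdef
  have hG : ∀ k, IsClosed (G k) ∧ IsNowhereDense (G k) := by
    intro k; induction k with
    | zero =>
      have : G 0 = closure (f 0) := by simp [hGdef]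
      rw [this]; exact ⟨isClosed_closure, (hfnd 0).closure⟩
    | succ k ih =>
      have : G (k+1) = G k ∪ closure (f (k+1)) := by
        rw [hGdef]
        simp only [Finset.range_add_one (n := k+1), Finset.set_biUnion_insert]
        rw [Set.union_comm]
      rw [this]
      exact nwd_union ih.1 ih.2 isClosed_closure (hfnd _).closure
  have step : ∀ k st, ∃ m, st < m ∧ ∃ d : ℕ → Bool,
      ∀ χ : ℕ → Bool, (∀ i, st ≤ i → i < m → χ i = d i) → χ ∉ G k :=
    fun k st => ext_all (hG k).1 (hG k).2 st
  choose M hMlt D hD using step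
  set nn : ℕ → ℕ := fun k => Nat.rec 0 (fun k ih => M k ih) k with hnn
  have hsucc : ∀ k, nn (k+1) = M k (nn k) := fun k => rfl
  have hmono : StrictMono nn := strictMono_nat_of_lt_succ (fun k => by
    rw [hsucc]; exact hMlt k (nn k))
  refine ⟨nn, hmono, rfl, ?_⟩
  intro A hA
  by_contra hinf
  set K := {k | Set.Ico (nn k) (nn (k+1)) ⊆ A} with hK
  replace hinf : K.Infinite := hinf
  have huniq : ∀ k k' i, i ∈ Set.Ico (nn k) (nn (k+1)) → i ∈ Set.Ico (nn k') (nn (k'+1)) →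
      k = k' := by
    intro k k' i hi hi'
    rcases lt_trichotomy k k' with h | h | h
    · exact absurd (lt_of_lt_of_le hi.2 (hmono.le_iff_le.2 h)) (not_lt.2 hi'.1)
    · exact h
    · exact absurd (lt_of_lt_of_le hi'.2 (hmono.le_iff_le.2 h)) (not_lt.2 hi.1)
  set χB : ℕ → Bool := fun i =>
    decide (∃ k, k ∈ K ∧ i ∈ Set.Ico (nn k) (nn (k+1)) ∧ D k (nn k) i = true) with hχB
  have hmatch : ∀ k ∈ K, ∀ i, nn k ≤ i → i < nn (k+1) → χB i = D k (nn k) i := by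
    intro k hk i hi1 hi2
    by_cases hDk : D k (nn k) i = true
    · rw [hDk, hχB]
      simp only [decide_eq_true_eq]
      exact ⟨k, hk, ⟨hi1, hi2⟩, hDk⟩
    · rw [Bool.not_eq_true] at hDk
      rw [hDk, hχB]
      simp only [decide_eq_false_iff_not]
      rintro ⟨k', hk', hi', hD'⟩
      rw [huniq k k' i ⟨hi1, hi2⟩ hi'] at hDk
      rw [hD'] at hDk
      exact absurd hDk.symm (by simp)
  have havoid : ∀ k ∈ K, χB ∉ G k := fun k hk => hD k (nn k) χB (hmatch k hk)
  have hBS : χB ∈ S := by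
    have hBsub : {n | χB n = true} ⊆ A := by
      intro i hi
      rw [Set.mem_setOf_eq, hχB, decide_eq_true_eq] at hi
      obtain ⟨k, hk, hik, -⟩ := hi
      exact hk hik
    exact hI.1 _ _ hBsub hA
  obtain ⟨j, hj⟩ := Set.mem_iUnion.1 (hsub hBS)
  obtain ⟨k, hkK, hjk⟩ := hinf.exists_gt j
  exact havoid k hkK (Set.mem_biUnion (Finset.mem_range.2 (Nat.lt_succ_of_lt hjk)) hj)



def fIdx (nn : ℕ → ℕ) (i : ℕ) : ℕ := Nat.findGreatest (fun k => nn k ≤ i) i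

lemma fIdx_le (nn : ℕ → ℕ) (h0 : nn 0 = 0) (i : ℕ) : nn (fIdx nn i) ≤ i :=
  Nat.findGreatest_spec (P := fun k => nn k ≤ i) (Nat.zero_le i) (by show nn 0 ≤ i; rw [h0]; exact Nat.zero_le i)

lemma lt_fIdx_succ {nn : ℕ → ℕ} (hmono : StrictMono nn) (i : ℕ) :
    i < nn (fIdx nn i + 1) := by
  by_contra h
  push_neg at h
  have h1 : fIdx nn i + 1 ≤ i := le_trans (hmono.le_apply) h
  have h2 : fIdx nn i + 1 ≤ fIdx nn i := Nat.le_findGreatest (P := fun k => nn k ≤ i) h1 h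
  omega

lemma fIdx_eq {nn : ℕ → ℕ} (hmono : StrictMono nn) (h0 : nn 0 = 0) {k i : ℕ}
    (h1 : nn k ≤ i) (h2 : i < nn (k + 1)) : fIdx nn i = k := by
  have hA := fIdx_le nn h0 i
  have hB := lt_fIdx_succ hmono i
  rcases lt_trichotomy (fIdx nn i) k with h | h | h
  · exact absurd (lt_of_lt_of_le hB (hmono.le_iff_le.2 h)) (not_lt.2 h1)
  · exact h
  · exact absurd (lt_of_lt_of_le h2 (hmono.le_iff_le.2 h)) (not_lt.2 hA)

def aSeq : ℕ → ℕ := fun m => Nat.rec 0 (fun m ih => ih + m + 2) m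

lemma aSeq_zero : aSeq 0 = 0 := rfl
lemma aSeq_succ (m : ℕ) : aSeq (m + 1) = aSeq m + m + 2 := rfl

lemma aSeq_strictMono : StrictMono aSeq :=
  strictMono_nat_of_lt_succ fun m => by rw [aSeq_succ]; omega

lemma le_aSeq (m : ℕ) : m ≤ aSeq m := aSeq_strictMono.le_apply

/-- super-block index of a fine-block index -/
def supIdx (k : ℕ) : ℕ := fIdx aSeq k

lemma supIdx_eq {m k : ℕ} (h1 : aSeq m ≤ k) (h2 : k < aSeq (m + 1)) : supIdx k = m :=
  fIdx_eq aSeq_strictMono aSeq_zero h1 h2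

def pFun (nn : ℕ → ℕ) (i : ℕ) : ℕ := supIdx (fIdx nn i)

def cval (m j : ℕ) : ℝ := -1 + 2 * j / (m + 1)

def thFun (nn : ℕ → ℕ) (i : ℕ) : ℝ := cval (pFun nn i) (fIdx nn i - aSeq (pFun nn i))

lemma cval_mem_Icc {m j : ℕ} (hj : j ≤ m + 1) : cval m j ∈ Set.Icc (-1 : ℝ) 1 := by
  have hm : (0:ℝ) < m + 1 := by positivity
  have hj' : (j:ℝ) ≤ m + 1 := by exact_mod_cast hj
  constructor
  · have : (0:ℝ) ≤ 2 * j / (m+1) := by positivity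
    simp only [cval]; linarith
  · have h2 : 2 * (j:ℝ) / (m+1) ≤ 2 := by rw [div_le_iff₀ hm]; linarith
    simp only [cval]; linarith

lemma cval_net (m : ℕ) {t : ℝ} (ht : t ∈ Set.Icc (-1 : ℝ) 1) :
    ∃ j ≤ m + 1, |cval m j - t| ≤ 2 / (m + 1) := by
  have hm : (0:ℝ) < m + 1 := by positivity
  set r : ℝ := (t + 1) * (m + 1) / 2 with hr
  have hr0 : 0 ≤ r := by
    have : 0 ≤ t + 1 := by linarith [ht.1]
    positivity
  have hrle : r ≤ m + 1 := by
    rw [hr, div_le_iff₀ (by norm_num : (0:ℝ) < 2)]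
    nlinarith [ht.2]
  refine ⟨⌊r⌋₊, ?_, ?_⟩
  · have h1 : ⌊r⌋₊ ≤ ⌊((m + 1 : ℕ) : ℝ)⌋₊ := Nat.floor_mono (by push_cast; linarith)
    rwa [Nat.floor_natCast] at h1
  · have hfl : (⌊r⌋₊ : ℝ) ≤ r := Nat.floor_le hr0
    have hfu : r < (⌊r⌋₊ : ℝ) + 1 := Nat.lt_floor_add_one r
    have key : cval m ⌊r⌋₊ - t = 2 * ((⌊r⌋₊ : ℝ) - r) / (m + 1) := by
      rw [hr, cval]; field_simp; ring
    rw [key, abs_div, abs_of_pos hm, abs_mul, abs_two]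
    have h1 : |(⌊r⌋₊ : ℝ) - r| ≤ 1 := abs_le.2 ⟨by linarith, by linarith⟩
    calc 2 * |(⌊r⌋₊ : ℝ) - r| / (m + 1) ≤ 2 * 1 / (m + 1) := by gcongr
    _ = 2 / (m + 1) := by ring



lemma supIdx_spec (k : ℕ) : aSeq (supIdx k) ≤ k ∧ k < aSeq (supIdx k + 1) :=
  ⟨fIdx_le aSeq aSeq_zero k, lt_fIdx_succ aSeq_strictMono k⟩

lemma thFun_mem_Icc {nn : ℕ → ℕ} (i : ℕ) : thFun nn i ∈ Set.Icc (-1 : ℝ) 1 := by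
  apply cval_mem_Icc
  have h := supIdx_spec (fIdx nn i)
  rw [aSeq_succ] at h
  unfold pFun
  omega

lemma pFun_fiber_finite {nn : ℕ → ℕ} (hmono : StrictMono nn) (m : ℕ) :
    {i : ℕ | pFun nn i = m}.Finite := by
  apply Set.Finite.subset (Set.finite_Iio (nn (aSeq (m + 1))))
  intro i hi
  rw [Set.mem_setOf_eq] at hi
  unfold pFun at hi
  have h := supIdx_spec (fIdx nn i)
  rw [hi] at h
  have h2 : fIdx nn i + 1 ≤ aSeq (m + 1) := h.2
  calc i < nn (fIdx nn i + 1) := lt_fIdx_succ hmono i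
  _ ≤ nn (aSeq (m + 1)) := hmono.monotone h2

def dualFilter (I : Set (Set ℕ)) (hI : IsNatIdeal I) : Filter ℕ where
  sets := {s | sᶜ ∈ I}
  univ_sets := by
    simp only [Set.mem_setOf_eq, Set.compl_univ]
    exact hI.1 ∅ {0} (Set.empty_subset _) (hI.2.2.1 0)
  sets_of_superset := by
    intro s t hs hst
    exact hI.1 tᶜ sᶜ (Set.compl_subset_compl.2 hst) hs
  inter_sets := by
    intro s t hs ht
    simp only [Set.mem_setOf_eq, Set.compl_inter]
    exact hI.2.1 _ _ hs ht

lemma master {I : Set (Set ℕ)} (hI : IsNatIdeal I) {nn : ℕ → ℕ} (hmono : StrictMono nn)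
    (h0 : nn 0 = 0) (hTal : ∀ A ∈ I, {k : ℕ | Set.Ico (nn k) (nn (k + 1)) ⊆ A}.Finite)
    (V : Ultrafilter ℕ) (hV : ∀ A ∈ V, A.Infinite) {t : ℝ} (ht : t ∈ Set.Icc (-1 : ℝ) 1) :
    ∃ U : Ultrafilter ℕ, U ∈ PI I ∧ U.map (pFun nn) = V ∧
      Filter.Tendsto (thFun nn) U (𝓝 t) := by
  set F : Filter ℕ := (Filter.comap (pFun nn) ↑V ⊓ Filter.comap (thFun nn) (𝓝 t))
      ⊓ dualFilter I hI with hF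
  have hne : F.NeBot := by
    rw [Filter.neBot_iff]
    intro hbot
    have hmem : (∅ : Set ℕ) ∈ F := by rw [hbot]; exact Filter.mem_bot
    rw [hF, Filter.mem_inf_iff] at hmem
    obtain ⟨s₁, hs₁, s₂, hs₂, hs⟩ := hmem
    rw [Filter.mem_inf_iff] at hs₁
    obtain ⟨u₁, hu₁, u₂, hu₂, hu⟩ := hs₁
    rw [Filter.mem_comap] at hu₁ hu₂
    obtain ⟨A, hA, hu₁'⟩ := hu₁
    obtain ⟨W, hW, hu₂'⟩ := hu₂
    obtain ⟨ε, hε, hball⟩ := Metric.mem_nhds_iff.1 hW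
    -- B := s₂ᶜ ∈ I
    have hB : s₂ᶜ ∈ I := hs₂
    obtain ⟨k₀, hk₀⟩ := (hTal _ hB).bddAbove
    obtain ⟨N, hN⟩ := exists_nat_gt (2 / ε)
    have hN0 : (0:ℝ) < N := lt_trans (by positivity) hN
    obtain ⟨m, hmA, hm⟩ := (hV A hA).exists_gt (max k₀ N)
    have hmk₀ : k₀ < m := lt_of_le_of_lt (le_max_left _ _) hm
    have hmN : N < m := lt_of_le_of_lt (le_max_right _ _) hm
    obtain ⟨j, hj, hjnet⟩ := cval_net m ht
    set k := aSeq m + j with hk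
    have hknotin : k ∉ {k : ℕ | Set.Ico (nn k) (nn (k + 1)) ⊆ s₂ᶜ} := by
      intro hmem
      have : k ≤ k₀ := hk₀ hmem
      have : m ≤ k := le_trans (le_aSeq m) (Nat.le_add_right _ _)
      omega
    rw [Set.mem_setOf_eq, Set.not_subset] at hknotin
    obtain ⟨i, hik, hiB⟩ := hknotin
    -- i is our witness
    have hfi : fIdx nn i = k := fIdx_eq hmono h0 hik.1 hik.2
    have hsup : supIdx k = m := supIdx_eq (Nat.le_add_right _ _)
      (by rw [aSeq_succ]; omega)
    have hpi : pFun nn i = m := by rw [pFun, hfi, hsup]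
    have hth : thFun nn i = cval m j := by
      rw [thFun, hpi, hfi, hk, Nat.add_sub_cancel_left]
    have hiW : thFun nn i ∈ W := by
      apply hball
      rw [Metric.mem_ball, hth, Real.dist_eq]
      calc |cval m j - t| ≤ 2 / (m + 1) := hjnet
      _ ≤ 2 / N := by
        apply div_le_div_of_nonneg_left (by norm_num) hN0
        have hmN' : (N:ℝ) ≤ (m:ℝ) := by exact_mod_cast hmN.le
        linarith
      _ < ε := by
        rw [div_lt_iff₀ hN0]
        rw [div_lt_iff₀ hε] at hN
        linarith
    have : i ∈ (∅ : Set ℕ) := by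
      rw [hs]
      refine ⟨?_, ?_⟩
      · rw [hu]
        refine ⟨hu₁' ?_, hu₂' ?_⟩
        · rw [Set.mem_preimage, hpi]; exact hmA
        · exact Set.mem_preimage.2 hiW
      · simpa using hiB
    exact absurd this (Set.notMem_empty i)
  set U := Ultrafilter.of F with hU
  have hUF : ↑U ≤ F := Ultrafilter.of_le F
  refine ⟨U, ?_, ?_, ?_⟩
  · intro B hB
    have : Bᶜ ∈ dualFilter I hI := by
      show Bᶜᶜ ∈ I
      rwa [compl_compl]
    exact hUF (le_trans (le_refl F) inf_le_right this)
  · have h1 : ↑U ≤ Filter.comap (pFun nn) ↑V :=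
      le_trans hUF (le_trans inf_le_left inf_le_left)
    have h2 : (U.map (pFun nn) : Filter ℕ) ≤ ↑V := by
      rw [Ultrafilter.coe_map]
      exact Filter.map_le_iff_le_comap.2 h1
    exact Ultrafilter.coe_le_coe.1 h2
  · have h1 : ↑U ≤ Filter.comap (thFun nn) (𝓝 t) :=
      le_trans hUF (le_trans inf_le_left inf_le_right)
    exact Filter.map_le_iff_le_comap.2 h1




lemma ultramap_eq_extend (p : ℕ → ℕ) :
    (fun U : Ultrafilter ℕ => U.map p) = Ultrafilter.extend ((pure : ℕ → Ultrafilter ℕ) ∘ p) := by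
  funext U
  symm
  rw [ultrafilter_extend_eq_iff]
  have h : U.map ((pure : ℕ → Ultrafilter ℕ) ∘ p) = (U.map p).map pure := (Ultrafilter.map_map U p pure).symm
  rw [h]
  exact ultrafilter_converges_iff.2 (bind_pure (U.map p)).symm

lemma continuous_ultramap (p : ℕ → ℕ) : Continuous (fun U : Ultrafilter ℕ => U.map p) := by
  rw [ultramap_eq_extend]
  exact continuous_ultrafilter_extend _

def thSub (nn : ℕ → ℕ) (i : ℕ) : Set.Icc (-1:ℝ) 1 := ⟨thFun nn i, thFun_mem_Icc i⟩

def thExt (nn : ℕ → ℕ) : Ultrafilter ℕ → Set.Icc (-1:ℝ) 1 := Ultrafilter.extend (thSub nn)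

lemma continuous_thExt (nn : ℕ → ℕ) : Continuous (thExt nn) := continuous_ultrafilter_extend _

def thVal (nn : ℕ → ℕ) (U : Ultrafilter ℕ) : ℝ := (thExt nn U : ℝ)

lemma continuous_thVal (nn : ℕ → ℕ) : Continuous (thVal nn) :=
  continuous_subtype_val.comp (continuous_thExt nn)

lemma abs_thVal_le (nn : ℕ → ℕ) (U : Ultrafilter ℕ) : |thVal nn U| ≤ 1 :=
  abs_le.2 ⟨(thExt nn U).2.1, (thExt nn U).2.2⟩

lemma thVal_eq {nn : ℕ → ℕ} {U : Ultrafilter ℕ} {t : ℝ} (ht : t ∈ Set.Icc (-1:ℝ) 1)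
    (h : Filter.Tendsto (thFun nn) U (𝓝 t)) : thVal nn U = t := by
  have : thExt nn U = ⟨t, ht⟩ := by
    rw [thExt, ultrafilter_extend_eq_iff]
    exact tendsto_subtype_rng.2 h
  rw [thVal, this]


end


lemma mem_PI_infinite {I : Set (Set ℕ)} (hI : IsNatIdeal I) {U : Ultrafilter ℕ}
    (hU : U ∈ PI I) {A : Set ℕ} (hA : A ∈ U) : A.Infinite := by
  intro hfin
  have h1 : Aᶜ ∈ U := hU A (finite_mem_ideal hI hfin)
  exact (Ultrafilter.compl_mem_iff_notMem.1 h1) hA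

lemma map_p_nonprincipal {I : Set (Set ℕ)} (hI : IsNatIdeal I) {nn : ℕ → ℕ}
    (hmono : StrictMono nn) {U : Ultrafilter ℕ} (hU : U ∈ PI I) :
    (U.map (pFun nn)) ∈ betaNRemainder := by
  rw [betaNRemainder, Set.mem_compl_iff]
  rintro ⟨m, hm⟩
  have h1 : {i | pFun nn i = m} ∈ U := by
    have h2 : ({m} : Set ℕ) ∈ U.map (pFun nn) := by
      rw [← hm]; exact singleton_mem_pure
    rw [Ultrafilter.mem_map] at h2
    have h3 : pFun nn ⁻¹' ({m} : Set ℕ) = {i | pFun nn i = m} := by ext i; simp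
    rwa [h3] at h2
  exact absurd (pFun_fiber_finite hmono m) (mem_PI_infinite hI hU h1)

lemma nonprincipal_infinite {V : Ultrafilter ℕ} (hV : V ∈ betaNRemainder) :
    ∀ A ∈ V, A.Infinite := by
  intro A hA
  intro hfin
  obtain ⟨x, -, rfl⟩ := Ultrafilter.eq_pure_of_finite_mem hfin hA
  exact hV ⟨x, rfl⟩

instance : Nonempty ↥betaNRemainder := by
  refine ⟨⟨Filter.hyperfilter ℕ, ?_⟩⟩
  rintro ⟨x, hx⟩
  have h1 : ({x} : Set ℕ) ∈ Filter.hyperfilter ℕ := by rw [← hx]; exact singleton_mem_pure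
  exact Filter.notMem_hyperfilter_of_finite (Set.finite_singleton x) h1


/-- If an ideal `I` on `ℕ` has the Baire property, then the set of functions
in `C(P_I, ℝ)` whose range is a (nondegenerate closed) interval contains, up to the zero
function, a subspace isometric to `C(βℕ∖ℕ, ℝ)`. -/
theorem stmt11 (I : Set (Set ℕ)) (hI : IsNatIdeal I) (hBP : IdealHasBaireProperty I) :
    ∃ T : C(↥betaNRemainder, ℝ) →ₗᵢ[ℝ] C(↥(PI I), ℝ),
      ∀ g : C(↥betaNRemainder, ℝ), g ≠ 0 →
        ∃ a b : ℝ, a < b ∧ Set.range (T g) = Set.Icc a b := by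
  obtain ⟨nn, hmono, h0, hTal⟩ := talagrand hI (ideal_meagre hI hBP)
  have hπmem : ∀ U : ↥(PI I), (U : Ultrafilter ℕ).map (pFun nn) ∈ betaNRemainder :=
    fun U => map_p_nonprincipal hI hmono U.2
  set π : ↥(PI I) → ↥betaNRemainder :=
    fun U => ⟨(U : Ultrafilter ℕ).map (pFun nn), hπmem U⟩ with hπ
  have hπcont : Continuous π :=
    Continuous.subtype_mk ((continuous_ultramap (pFun nn)).comp continuous_subtype_val) _
  set πC : C(↥(PI I), ↥betaNRemainder) := ⟨π, hπcont⟩ with hπC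
  set θC : C(↥(PI I), ℝ) :=
    ⟨fun U => thVal nn ↑U, (continuous_thVal nn).comp continuous_subtype_val⟩ with hθC
  have key : ∀ (V : ↥betaNRemainder) (t : ℝ), t ∈ Set.Icc (-1:ℝ) 1 →
      ∃ U : ↥(PI I), π U = V ∧ thVal nn ↑U = t := by
    intro V t ht
    obtain ⟨U, hUPI, hmap, htend⟩ :=
      master hI hmono h0 hTal (V : Ultrafilter ℕ) (nonprincipal_infinite V.2) ht
    exact ⟨⟨U, hUPI⟩, Subtype.ext hmap, thVal_eq ht htend⟩
  set Tlin : C(↥betaNRemainder, ℝ) →ₗ[ℝ] C(↥(PI I), ℝ) :=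
    { toFun := fun g => (g.comp πC) * θC
      map_add' := by
        intro g h; ext U
        simp only [ContinuousMap.mul_apply, ContinuousMap.comp_apply, ContinuousMap.add_apply]
        ring
      map_smul' := by
        intro c g; ext U
        simp only [ContinuousMap.mul_apply, ContinuousMap.comp_apply,
          ContinuousMap.smul_apply, RingHom.id_apply, smul_eq_mul]
        ring } with hTlin
  have hTapply : ∀ (g : C(↥betaNRemainder, ℝ)) (U : ↥(PI I)),
      Tlin g U = g (π U) * thVal nn ↑U := fun g U => rfl
  have hnorm : ∀ g : C(↥betaNRemainder, ℝ), ‖Tlin g‖ = ‖g‖ := by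
    intro g
    apply le_antisymm
    · rw [ContinuousMap.norm_le _ (norm_nonneg g)]
      intro U
      rw [hTapply, Real.norm_eq_abs, abs_mul]
      calc |g (π U)| * |thVal nn ↑U| ≤ ‖g‖ * 1 := by
            apply mul_le_mul ?_ (abs_thVal_le nn ↑U) (abs_nonneg _) (norm_nonneg _)
            rw [← Real.norm_eq_abs]
            exact ContinuousMap.norm_coe_le_norm g (π U)
      _ = ‖g‖ := mul_one _
    · rw [ContinuousMap.norm_le _ (norm_nonneg (Tlin g))]
      intro V
      obtain ⟨U, hUV, hU1⟩ := key V 1 (by norm_num)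
      have : Tlin g U = g V := by rw [hTapply, hUV, hU1, mul_one]
      calc ‖g V‖ = ‖Tlin g U‖ := by rw [this]
      _ ≤ ‖Tlin g‖ := ContinuousMap.norm_coe_le_norm _ U
  refine ⟨⟨Tlin, hnorm⟩, ?_⟩
  intro g hg
  have hgpos : 0 < ‖g‖ := norm_pos_iff.2 hg
  refine ⟨-‖g‖, ‖g‖, by linarith, ?_⟩
  have hcoe : ∀ U, (LinearIsometry.mk Tlin hnorm) g U = Tlin g U := fun U => rfl
  ext y
  constructor
  · rintro ⟨U, rfl⟩
    rw [Set.mem_Icc, ← abs_le]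
    rw [hcoe, ← Real.norm_eq_abs]
    calc ‖Tlin g U‖ ≤ ‖Tlin g‖ := ContinuousMap.norm_coe_le_norm _ U
    _ = ‖g‖ := hnorm g
  · intro hy
    rw [Set.mem_Icc, ← abs_le] at hy
    obtain ⟨V, -, hV'⟩ := isCompact_univ.exists_isMaxOn Set.univ_nonempty
      ((map_continuous g).abs.continuousOn)
    have hV : ∀ W : ↥betaNRemainder, |g W| ≤ |g V| := fun W => hV' (Set.mem_univ W)
    have hgV : ‖g‖ = |g V| := by
      apply le_antisymm
      · rw [ContinuousMap.norm_le _ (abs_nonneg _)]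
        intro W
        rw [Real.norm_eq_abs]
        exact hV W
      · rw [← Real.norm_eq_abs]
        exact ContinuousMap.norm_coe_le_norm g V
    have hgV0 : g V ≠ 0 := by
      intro h
      rw [h, abs_zero] at hgV
      exact absurd hgV (by linarith)
    have ht : y / g V ∈ Set.Icc (-1:ℝ) 1 := by
      rw [Set.mem_Icc, ← abs_le, abs_div]
      rw [div_le_one (abs_pos.2 hgV0)]
      rw [hgV] at hy
      exact hy
    obtain ⟨U, hUV, hUt⟩ := key V (y / g V) ht
    refine ⟨U, ?_⟩
    rw [hcoe, hTapply, hUV, hUt, mul_comm, div_mul_cancel₀ y hgV0]
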